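/- arXiv:1510.05592 — 4 statements merged into one kernel-verified Lean document; each statement's English description precedes it below -/
import Mathlib

section
/- Let Γ = ∗_{i∈ℕ} Γ_i be the free product of a countably infinite family of countable groups, each containing an element of infinite order, and let α ∈ S(Γ,X) be an action on the Cantor set X satisfying property R. Then every nonzero closed Γ-invariant linear subspace of the Banach space C(X,ℂ) (with the supremum norm, Γ acting by f ↦ f ∘ α_{s⁻¹}) contains the constant functions. -/
open TopologicalSpace

/-- The group structure on the homeomorphism group of `X`,
with `(f * g) x = f (g x)`. -/
instance homeoGroup (X : Type*) [TopologicalSpace X] : Group (X ≃ₜ X) where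
  mul f g := g.trans f
  one := Homeomorph.refl X
  inv := Homeomorph.symm
  mul_assoc _ _ _ := Homeomorph.ext fun _ => rfl
  one_mul _ := Homeomorph.ext fun _ => rfl
  mul_one _ := Homeomorph.ext fun _ => rfl
  inv_mul_cancel f := Homeomorph.ext fun x => f.symm_apply_apply x

/-- The topology on `Homeo(X)` of uniform convergence of a homeomorphism together with
its inverse: for a compact metrizable space `X` the compact-open topology on `C(X, X)`
is the topology of uniform convergence, and we pull back the product topology along
`φ ↦ (φ, φ⁻¹)`. -/
instance homeoTopology (X : Type*) [TopologicalSpace X] : TopologicalSpace (X ≃ₜ X) :=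
  TopologicalSpace.induced
    (fun φ : X ≃ₜ X => ((φ : C(X, X)), (φ.symm : C(X, X)))) inferInstance

/-- The space `S(Γ, X)` of actions of `Γ` on `X`, topologized as a subspace of
the product space `∏_Γ Homeo(X)`. -/
instance actionSpaceTopology (Γ X : Type*) [Group Γ] [TopologicalSpace X] :
    TopologicalSpace (Γ →* (X ≃ₜ X)) :=
  TopologicalSpace.induced (fun α : Γ →* (X ≃ₜ X) => (α : Γ → X ≃ₜ X)) inferInstance

/-- Property `R` of an action `α` of the infinite free product `∗_{i∈ℕ} G i` on the
Cantor set `X`: for every finite family `U 0, …, U (n-1)` of pairwise disjoint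
nonempty proper clopen subsets of `X`, there are infinitely many `i ∈ ℕ` such that
`G i` contains an infinite-order element `s` with `α_s (U j) = U (j+1)` for all `j`
(indices cyclically, i.e. in `Fin n`). -/
def PropertyR {G : ℕ → Type*} [∀ i, Group (G i)] {X : Type*} [TopologicalSpace X]
    (α : Monoid.CoprodI G →* (X ≃ₜ X)) : Prop :=
  ∀ (n : ℕ) [NeZero n] (U : Fin n → Set X),
    (∀ i, IsClopen (U i)) → (∀ i, (U i).Nonempty) → (∀ i, U i ≠ Set.univ) →
    Pairwise (Function.onFun Disjoint U) →
    {i : ℕ | ∃ s : G i, ¬ IsOfFinOrder s ∧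
      ∀ j : Fin n, α (Monoid.CoprodI.of s) '' U j = U (j + 1)}.Infinite

open Set

section Aux
variable {X : Type*} [TopologicalSpace X] [CompactSpace X] [T2Space X]
  [TotallyDisconnectedSpace X]

lemma myExists_ne_of_isOpen [PerfectSpace X] {U : Set X} (hU : IsOpen U) {x : X} (hx : x ∈ U) :
    ∃ y ∈ U, y ≠ x := by
  have h : U ∈ nhdsWithin x {x}ᶜ := mem_nhdsWithin_of_mem_nhds (hU.mem_nhds hx)
  obtain ⟨y, hyU, hyx⟩ := Filter.nonempty_of_mem (Filter.inter_mem h self_mem_nhdsWithin)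
  exact ⟨y, hyU, hyx⟩

lemma myClopen_split [PerfectSpace X] {U : Set X} (hU : IsClopen U) (hne : U.Nonempty) :
    ∃ A B : Set X, IsClopen A ∧ IsClopen B ∧ A.Nonempty ∧ B.Nonempty ∧ A ∪ B = U ∧
      Disjoint A B := by
  obtain ⟨x, hx⟩ := hne
  obtain ⟨y, hyU, hyx⟩ := myExists_ne_of_isOpen hU.2 hx
  have hopen : IsOpen (U \ {x}) := hU.2.sdiff isClosed_singleton
  obtain ⟨A, hA, hyA, hAsub⟩ := compact_exists_isClopen_in_isOpen hopen ⟨hyU, hyx⟩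
  have hAU : A ⊆ U := fun z hz => (hAsub hz).1
  refine ⟨A, U \ A, hA, hU.diff hA, ⟨y, hyA⟩, ⟨x, hx, fun hxA => (hAsub hxA).2 rfl⟩, ?_, ?_⟩
  · exact Set.union_diff_cancel hAU
  · exact Set.disjoint_left.mpr fun z hz hz2 => hz2.2 hz

lemma myClopen_split_many [PerfectSpace X] (m : ℕ) {U : Set X} (hU : IsClopen U)
    (hne : U.Nonempty) :
    ∃ W : Fin (m + 1) → Set X, (∀ i, IsClopen (W i)) ∧ (∀ i, (W i).Nonempty) ∧
      Pairwise (Function.onFun Disjoint W) ∧ (⋃ i, W i) = U := by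
  induction m generalizing U with
  | zero =>
    exact ⟨fun _ => U, fun _ => hU, fun _ => hne,
      fun i j hij => absurd (Fin.ext (by omega)) hij, by simp [Set.iUnion_const]⟩
  | succ m ih =>
    obtain ⟨A, B, hA, hB, hAne, hBne, hABU, hABd⟩ := myClopen_split hU hne
    obtain ⟨W, hWc, hWne, hWd, hWU⟩ := ih hA hAne
    refine ⟨fun i => Fin.cases B W i, ?_, ?_, ?_, ?_⟩
    · intro i
      induction i using Fin.cases with
      | zero => simpa using hB
      | succ i => simpa using hWc i
    · intro i
      induction i using Fin.cases with
      | zero => simpa using hBne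
      | succ i => simpa using hWne i
    · intro i j hij
      have hsub : ∀ k, W k ⊆ A := fun k => hWU ▸ Set.subset_iUnion W k
      induction i using Fin.cases with
      | zero =>
        induction j using Fin.cases with
        | zero => exact absurd rfl hij
        | succ j =>
          simpa [Function.onFun] using ((hABd.mono_left (hsub j)).symm : Disjoint B (W j))
      | succ i =>
        induction j using Fin.cases with
        | zero => simpa [Function.onFun] using (hABd.mono_left (hsub i) : Disjoint (W i) B)
        | succ j =>
          have : i ≠ j := fun h => hij (by rw [h])
          simpa [Function.onFun] using hWd this
    · ext x
      simp only [Set.mem_iUnion]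
      constructor
      · rintro ⟨i, hi⟩
        induction i using Fin.cases with
        | zero => exact hABU ▸ Or.inr (by simpa using hi)
        | succ i =>
          refine hABU ▸ Or.inl (hWU ▸ ?_)
          exact Set.mem_iUnion.mpr ⟨i, by simpa using hi⟩
      · intro hx
        rcases (hABU ▸ hx : x ∈ A ∪ B) with hxA | hxB
        · obtain ⟨i, hi⟩ := Set.mem_iUnion.mp (hWU ▸ hxA : x ∈ ⋃ i, W i)
          exact ⟨i.succ, by simpa using hi⟩
        · exact ⟨0, by simpa using hxB⟩

end Aux

open Set

section Aux2
variable {X : Type*} [TopologicalSpace X] [CompactSpace X] [T2Space X]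
  [TotallyDisconnectedSpace X]

lemma myOsc_partition [Nonempty X] (f : C(X, ℂ)) {ε : ℝ} (hε : 0 < ε) :
    ∃ (k : ℕ) (V : Fin (k + 1) → Set X), (∀ i, IsClopen (V i)) ∧ (∀ i, (V i).Nonempty) ∧
      Pairwise (Function.onFun Disjoint V) ∧ (⋃ i, V i) = Set.univ ∧
      ∀ i, ∀ x ∈ V i, ∀ y ∈ V i, ‖f x - f y‖ ≤ ε := by
  classical
  -- clopen neighborhoods on which f varies little
  have hK : ∀ x : X, ∃ K : Set X, IsClopen K ∧ x ∈ K ∧ K ⊆ f ⁻¹' Metric.ball (f x) (ε / 2) := by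
    intro x
    have hopen : IsOpen (f ⁻¹' Metric.ball (f x) (ε / 2)) :=
      (Metric.isOpen_ball).preimage f.continuous
    have hmem : x ∈ f ⁻¹' Metric.ball (f x) (ε / 2) := by
      simp [Metric.mem_ball, half_pos hε]
    exact compact_exists_isClopen_in_isOpen hopen hmem
  choose K hKc hKm hKs using hK
  obtain ⟨t, ht⟩ := IsCompact.elim_finite_subcover isCompact_univ K (fun x => (hKc x).2)
    (fun x _ => Set.mem_iUnion.mpr ⟨x, hKm x⟩)
  have htne : t.Nonempty := by
    obtain ⟨x⟩ := ‹Nonempty X›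
    obtain ⟨y, hy, -⟩ := Set.mem_iUnion₂.mp (ht (Set.mem_univ x))
    exact ⟨y, hy⟩
  set N := t.card with hN
  set e : Fin N → X := fun i => (t.equivFin.symm i : X) with he
  set K' : Fin N → Set X := fun i => K (e i) with hK'
  have hcov : ∀ x : X, ∃ i, x ∈ K' i := by
    intro x
    obtain ⟨y, hy, hxy⟩ := Set.mem_iUnion₂.mp (ht (Set.mem_univ x))
    exact ⟨t.equivFin ⟨y, hy⟩, by simpa [hK', he] using hxy⟩
  -- disjointify
  set D : Fin N → Set X := fun i => K' i \ ⋃ j ∈ Finset.univ.filter (· < i), K' j with hD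
  have hDc : ∀ i, IsClopen (D i) := by
    intro i
    exact ((hKc _).diff (Set.Finite.isClopen_biUnion (Set.toFinite _)
      (fun j _ => hKc _)))
  have hDsub : ∀ i, D i ⊆ K' i := fun i => Set.diff_subset
  have hDd : ∀ i j : Fin N, i < j → Disjoint (D i) (D j) := by
    intro i j hij
    refine Set.disjoint_left.mpr fun z hzi hzj => ?_
    exact hzj.2 (Set.mem_iUnion₂.mpr ⟨i, by simp [hij], hDsub i hzi⟩)
  have hDcov : ∀ x : X, ∃ i, x ∈ D i := by
    intro x
    have hne : (Finset.univ.filter (fun i => x ∈ K' i)).Nonempty := by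
      obtain ⟨i, hi⟩ := hcov x
      exact ⟨i, by simp [hi]⟩
    set i := Finset.min' _ hne with hi
    have hxi : x ∈ K' i := by
      have := Finset.min'_mem _ hne
      simpa using this
    refine ⟨i, hxi, ?_⟩
    intro hx
    obtain ⟨j, hj, hxj⟩ := Set.mem_iUnion₂.mp hx
    have hji : j < i := by simpa using hj
    have : i ≤ j := Finset.min'_le _ _ (by simp [hxj])
    omega
  -- keep only nonempty parts
  set T : Finset (Fin N) := Finset.univ.filter (fun i => (D i).Nonempty) with hT
  have hTne : T.Nonempty := by
    obtain ⟨x⟩ := ‹Nonempty X›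
    obtain ⟨i, hi⟩ := hDcov x
    exact ⟨i, by simp [hT]; exact ⟨x, hi⟩⟩
  obtain ⟨k, hk⟩ : ∃ k, T.card = k + 1 :=
    ⟨T.card - 1, by have := Finset.card_pos.mpr hTne; omega⟩
  set q : Fin (k + 1) → Fin N := fun j => (T.equivFin.symm (Fin.cast hk.symm j) : Fin N)
    with hq
  have hqinj : Function.Injective q := by
    intro a b hab
    have := T.equivFin.symm.injective (Subtype.ext hab)
    simpa [Fin.ext_iff] using congrArg Fin.val this
  have hqmem : ∀ j, q j ∈ T := fun j => (T.equivFin.symm _).2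
  refine ⟨k, fun j => D (q j), fun j => hDc _, ?_, ?_, ?_, ?_⟩
  · intro j
    have := hqmem j
    simpa [hT] using this
  · intro a b hab
    have hq' : q a ≠ q b := fun h => hab (hqinj h)
    rcases lt_or_gt_of_ne hq' with h | h
    · exact hDd _ _ h
    · exact (hDd _ _ h).symm
  · refine Set.eq_univ_of_forall fun x => ?_
    obtain ⟨i, hi⟩ := hDcov x
    have hiT : i ∈ T := by simp [hT]; exact ⟨x, hi⟩
    refine Set.mem_iUnion.mpr ⟨Fin.cast hk (T.equivFin ⟨i, hiT⟩), ?_⟩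
    have : q (Fin.cast hk (T.equivFin ⟨i, hiT⟩)) = i := by
      simp [hq]
    rw [this]; exact hi
  · intro j x hx y hy
    have hx' := hKs (e (q j)) (hDsub _ hx)
    have hy' := hKs (e (q j)) (hDsub _ hy)
    simp only [Set.mem_preimage, Metric.mem_ball] at hx' hy'
    have : dist (f x) (f y) < ε := by
      calc dist (f x) (f y) ≤ dist (f x) (f (e (q j))) + dist (f (e (q j))) (f y) :=
            dist_triangle _ _ _
        _ < ε / 2 + ε / 2 := add_lt_add hx' (by rwa [dist_comm])
        _ = ε := add_halves ε
    calc ‖f x - f y‖ = dist (f x) (f y) := (dist_eq_norm _ _).symm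
      _ ≤ ε := this.le

end Aux2
section MainAux
variable {X : Type*} [TopologicalSpace X]

lemma myHomeo_mul_coe (φ ψ : X ≃ₜ X) : ⇑(φ * ψ) = ⇑φ ∘ ⇑ψ := rfl

open Fin.NatCast Fin.CommRing in
lemma myCyc_pow {n : ℕ} [NeZero n] (σ : X ≃ₜ X) (U : Fin n → Set X)
    (hcyc : ∀ j, σ '' U j = U (j + 1)) :
    ∀ (t : ℕ) (j : Fin n), ⇑(σ ^ t) '' U j = U (j + (t : Fin n)) := by
  intro t
  induction t with
  | zero =>
    intro j
    have h1 : ⇑((σ : X ≃ₜ X) ^ 0) = id := rfl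
    rw [h1, Set.image_id, Nat.cast_zero, add_zero]
  | succ t ih =>
    intro j
    rw [pow_succ, myHomeo_mul_coe, Set.image_comp, hcyc j, ih (j + 1)]
    congr 1
    push_cast
    ring

end MainAux

/-- Let `Γ = ∗_{i∈ℕ} G i` be the free product of countably many countable groups,
each containing an element of infinite order, and let `α` be a Cantor system of `Γ`
with property `R`. Then every nonzero closed `Γ`-invariant linear subspace of the
Banach space `C(X, ℂ)` (sup norm, `Γ` acting by `s·f = f ∘ α_{s⁻¹}`) contains all
constant functions. -/
theorem invariant_subspace_contains_constants (G : ℕ → Type*) [∀ i, Group (G i)]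
    [∀ i, Countable (G i)] (htf : ∀ i, ∃ s : G i, ¬ IsOfFinOrder s)
    (X : Type*) [TopologicalSpace X] [CompactSpace X] [MetrizableSpace X]
    [TotallyDisconnectedSpace X] [PerfectSpace X] [Nonempty X]
    (α : Monoid.CoprodI G →* (X ≃ₜ X)) (hR : PropertyR α)
    (V : Submodule ℂ C(X, ℂ)) (hV : V ≠ ⊥) (hclosed : IsClosed (V : Set C(X, ℂ)))
    (hinv : ∀ (s : Monoid.CoprodI G), ∀ f ∈ V, f.comp ((α s⁻¹ : X ≃ₜ X) : C(X, X)) ∈ V) :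
    ∀ c : ℂ, (ContinuousMap.const X c) ∈ V := by
  classical
  obtain ⟨f, hfV, hf0⟩ := Submodule.exists_mem_ne_zero_of_ne_bot hV
  obtain ⟨x₀, hx₀⟩ : ∃ x, f x ≠ 0 := by
    by_contra h
    push_neg at h
    exact hf0 (ContinuousMap.ext fun x => by simpa using h x)
  set δ := ‖f x₀‖ with hδdef
  have hδ : 0 < δ := norm_pos_iff.mpr hx₀
  set M := ‖f‖ with hMdef
  have hδM : δ ≤ M := f.norm_coe_le_norm x₀
  have hM0 : 0 ≤ M := le_trans hδ.le hδM
  -- Key approximation claim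
  have key : ∀ ε : ℝ, 0 < ε → ε ≤ δ / 2 →
      ∃ μ : ℂ, δ / 4 ≤ ‖μ‖ ∧ ∃ g ∈ V, ‖g - ContinuousMap.const X μ‖ ≤ ε := by
    intro ε hε hεδ
    obtain ⟨k, P, hPc, hPne, hPd, hPu, hPosc⟩ := myOsc_partition f hε
    obtain ⟨j₀, hj₀⟩ : ∃ j₀, x₀ ∈ P j₀ := by
      have hx : x₀ ∈ ⋃ i, P i := by rw [hPu]; trivial
      exact Set.mem_iUnion.mp hx
    set m₀ := max 1 ⌈(k : ℝ) * (4 * M + δ) / δ⌉₊ with hm₀def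
    have hm₀1 : 1 ≤ m₀ := le_max_left _ _
    have hm₀R : (k : ℝ) * (4 * M + δ) / δ ≤ (m₀ : ℝ) := by
      refine le_trans (Nat.le_ceil _) ?_
      exact_mod_cast Nat.cast_le.mpr (le_max_right _ _)
    obtain ⟨W, hWc, hWne, hWd, hWu⟩ := myClopen_split_many m₀ (hPc j₀) (hPne j₀)
    have hWsub : ∀ a, W a ⊆ P j₀ := fun a => hWu ▸ Set.subset_iUnion W a
    set n := (m₀ + 1) + k with hn
    haveI : NeZero n := ⟨by omega⟩
    set U : Fin n → Set X := Fin.append W (P ∘ j₀.succAbove) with hU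
    have hUleft : ∀ a : Fin (m₀ + 1), U (Fin.castAdd k a) = W a := fun a => by
      rw [hU]; exact Fin.append_left _ _ _
    have hUright : ∀ b : Fin k, U (Fin.natAdd (m₀ + 1) b) = P (j₀.succAbove b) := fun b => by
      rw [hU]; exact Fin.append_right _ _ _
    have hUc : ∀ i, IsClopen (U i) := by
      refine Fin.addCases (fun a => ?_) (fun b => ?_)
      · rw [hUleft]; exact hWc a
      · rw [hUright]; exact hPc _
    have hUne : ∀ i, (U i).Nonempty := by
      refine Fin.addCases (fun a => ?_) (fun b => ?_)
      · rw [hUleft]; exact hWne a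
      · rw [hUright]; exact hPne _
    have hUd : Pairwise (Function.onFun Disjoint U) := by
      have hd' : ∀ (a : Fin (m₀ + 1)) (b : Fin k),
          Disjoint (W a) (P (j₀.succAbove b)) := fun a b =>
        ((hPd (Fin.succAbove_ne j₀ b).symm).mono_left (hWsub a))
      refine Fin.addCases (fun a => ?_) (fun b => ?_) <;>
        refine Fin.addCases (fun a' => ?_) (fun b' => ?_)
      all_goals intro hne
      · have : a ≠ a' := fun h => hne (by rw [h])
        unfold Function.onFun
        rw [hUleft, hUleft]
        exact hWd this
      · unfold Function.onFun
        rw [hUleft, hUright]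
        exact hd' a b'
      · unfold Function.onFun
        rw [hUright, hUleft]
        exact (hd' a' b).symm
      · have : b ≠ b' := fun h => hne (by rw [h])
        unfold Function.onFun
        rw [hUright, hUright]
        exact hPd (fun h => this (Fin.succAbove_right_injective h))
    have hUu : ∀ x : X, ∃ j, x ∈ U j := by
      intro x
      have hx : x ∈ ⋃ i, P i := by rw [hPu]; trivial
      obtain ⟨j, hj⟩ := Set.mem_iUnion.mp hx
      by_cases hjj : j = j₀
      · subst hjj
        have hx' : x ∈ ⋃ a, W a := by rw [hWu]; exact hj
        obtain ⟨a, ha⟩ := Set.mem_iUnion.mp hx'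
        exact ⟨Fin.castAdd k a, by rw [hUleft]; exact ha⟩
      · obtain ⟨b, hb⟩ := Fin.exists_succAbove_eq hjj
        exact ⟨Fin.natAdd (m₀ + 1) b, by rw [hUright, hb]; exact hj⟩
    have hUproper : ∀ i, U i ≠ Set.univ := by
      intro i hi
      have hn2 : 2 ≤ n := by omega
      obtain ⟨i', hi'⟩ : ∃ i' : Fin n, i' ≠ i := by
        by_cases h : (i : ℕ) = 0
        · exact ⟨⟨1, by omega⟩, by simp [Fin.ext_iff, h]⟩
        · exact ⟨⟨0, by omega⟩, by simp [Fin.ext_iff]; omega⟩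
      obtain ⟨y, hy⟩ := hUne i'
      exact Set.disjoint_left.mp (hUd hi') hy (hi ▸ Set.mem_univ y)
    have hUosc : ∀ i, ∀ y ∈ U i, ∀ z ∈ U i, ‖f y - f z‖ ≤ ε := by
      refine Fin.addCases (fun a => ?_) (fun b => ?_)
      · rw [hUleft]
        exact fun y hy z hz => hPosc j₀ y (hWsub a hy) z (hWsub a hz)
      · rw [hUright]
        exact fun y hy z hz => hPosc _ y hy z hz
    choose rep hrepm using fun i => hUne i
    have hrepW : ∀ a : Fin (m₀ + 1), ‖f (rep (Fin.castAdd k a)) - f x₀‖ ≤ ε := by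
      intro a
      have h1 : rep (Fin.castAdd k a) ∈ P j₀ := by
        have := hrepm (Fin.castAdd k a)
        rw [hUleft] at this
        exact hWsub a this
      exact hPosc j₀ _ h1 _ hj₀
    -- apply property R
    obtain ⟨i, s, -, hcyc⟩ := (hR n U hUc hUne hUproper hUd).nonempty
    set w : Monoid.CoprodI G := Monoid.CoprodI.of s with hw
    have hpow := myCyc_pow (α w) U hcyc
    have hmem : ∀ (t : Fin n) (x : X) (j : Fin n), x ∈ U j →
        (α ((w ^ (t : ℕ))⁻¹)) x ∈ U (j - t) := by
      intro t x j hx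
      have h1 : ⇑(α (w ^ (t : ℕ))) '' U (j - t) = U j := by
        rw [map_pow, hpow]
        congr 1
        simp [Fin.cast_val_eq_self]
      have h2 : x ∈ ⇑(α (w ^ (t : ℕ))) '' U (j - t) := h1.symm ▸ hx
      obtain ⟨y, hy, hyx⟩ := h2
      have h3 : (α (w ^ (t : ℕ)))⁻¹ x = y := by
        rw [← hyx]
        exact (α (w ^ (t : ℕ))).symm_apply_apply y
      rw [map_inv, h3]
      exact hy
    set μ : ℂ := (n : ℂ)⁻¹ * ∑ i, f (rep i) with hμdef
    set g : C(X, ℂ) := (n : ℂ)⁻¹ •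
      ∑ t : Fin n, f.comp ((α ((w ^ (t : ℕ))⁻¹) : X ≃ₜ X) : C(X, X)) with hgdef
    have hgV : g ∈ V := by
      refine Submodule.smul_mem _ _ (Submodule.sum_mem _ fun t _ => ?_)
      exact hinv (w ^ (t : ℕ)) f hfV
    have hn0 : (0 : ℝ) < (n : ℝ) := by positivity
    have hgnorm : ‖g - ContinuousMap.const X μ‖ ≤ ε := by
      refine (ContinuousMap.norm_le _ hε.le).mpr fun x => ?_
      obtain ⟨j, hj⟩ := hUu x
      have hre : ∑ t : Fin n, f (rep (j - t)) = ∑ i, f (rep i) :=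
        Fintype.sum_equiv (Equiv.subLeft j) _ _ (fun t => rfl)
      have hx_eval : (g - ContinuousMap.const X μ) x
          = (n : ℂ)⁻¹ * ∑ t : Fin n,
              (f ((α ((w ^ (t : ℕ))⁻¹)) x) - f (rep (j - t))) := by
        rw [Finset.sum_sub_distrib, hre]
        simp [hgdef, hμdef, mul_sub]
      rw [hx_eval, norm_mul, norm_inv, Complex.norm_natCast]
      have hsum : ‖∑ t : Fin n, (f ((α ((w ^ (t : ℕ))⁻¹)) x) - f (rep (j - t)))‖
          ≤ (n : ℝ) * ε := by
        refine le_trans (norm_sum_le _ _) ?_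
        have : ∀ t : Fin n, ‖f ((α ((w ^ (t : ℕ))⁻¹)) x) - f (rep (j - t))‖ ≤ ε :=
          fun t => hUosc (j - t) _ (hmem t x j hj) _ (hrepm (j - t))
        calc ∑ t : Fin n, ‖f ((α ((w ^ (t : ℕ))⁻¹)) x) - f (rep (j - t))‖
            ≤ ∑ _t : Fin n, ε := Finset.sum_le_sum fun t _ => this t
          _ = (n : ℝ) * ε := by simp [mul_comm]
      calc ((n : ℝ))⁻¹ * ‖∑ t : Fin n, (f ((α ((w ^ (t : ℕ))⁻¹)) x) - f (rep (j - t)))‖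
          ≤ (n : ℝ)⁻¹ * ((n : ℝ) * ε) := by
            exact mul_le_mul_of_nonneg_left hsum (by positivity)
        _ = ε := by field_simp
    -- lower bound on μ
    have hμlow : δ / 4 ≤ ‖μ‖ := by
      have hsplit : ∑ i, f (rep i)
          = (∑ a : Fin (m₀ + 1), f (rep (Fin.castAdd k a)))
            + ∑ b : Fin k, f (rep (Fin.natAdd (m₀ + 1) b)) := Fin.sum_univ_add _
      set S₁ : ℂ := ∑ a : Fin (m₀ + 1), f (rep (Fin.castAdd k a)) with hS₁def
      set S₂ : ℂ := ∑ b : Fin k, f (rep (Fin.natAdd (m₀ + 1) b)) with hS₂def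
      have hS1close : ‖S₁ - (m₀ + 1 : ℕ) * f x₀‖ ≤ ((m₀ : ℝ) + 1) * ε := by
        have : S₁ - (m₀ + 1 : ℕ) * f x₀
            = ∑ a : Fin (m₀ + 1), (f (rep (Fin.castAdd k a)) - f x₀) := by
          rw [Finset.sum_sub_distrib]
          congr 1
          simp [Finset.sum_const, Finset.card_univ]
        rw [this]
        refine le_trans (norm_sum_le _ _) ?_
        calc ∑ a : Fin (m₀ + 1), ‖f (rep (Fin.castAdd k a)) - f x₀‖
            ≤ ∑ _a : Fin (m₀ + 1), ε := Finset.sum_le_sum fun a _ => hrepW a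
          _ = ((m₀ : ℝ) + 1) * ε := by simp [mul_comm]
      have hS1 : ((m₀ : ℝ) + 1) * (δ - ε) ≤ ‖S₁‖ := by
        have h1 : ‖(((m₀ + 1 : ℕ)) : ℂ) * f x₀‖ = ((m₀ : ℝ) + 1) * δ := by
          rw [norm_mul, Complex.norm_natCast]
          push_cast
          rw [hδdef]
        have h2 : ‖(((m₀ + 1 : ℕ)) : ℂ) * f x₀‖ ≤ ‖S₁‖ + ‖S₁ - (m₀ + 1 : ℕ) * f x₀‖ := by
          calc ‖(((m₀ + 1 : ℕ)) : ℂ) * f x₀‖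
              = ‖S₁ - (S₁ - (m₀ + 1 : ℕ) * f x₀)‖ := by ring_nf
            _ ≤ ‖S₁‖ + ‖S₁ - (m₀ + 1 : ℕ) * f x₀‖ := norm_sub_le _ _
        nlinarith [hS1close]
      have hS2 : ‖S₂‖ ≤ (k : ℝ) * M := by
        refine le_trans (norm_sum_le _ _) ?_
        calc ∑ b : Fin k, ‖f (rep (Fin.natAdd (m₀ + 1) b))‖
            ≤ ∑ _b : Fin k, M := Finset.sum_le_sum fun b _ => f.norm_coe_le_norm _
          _ = (k : ℝ) * M := by simp [mul_comm]
      have hSig : ((m₀ : ℝ) + 1) * (δ - ε) - (k : ℝ) * M ≤ ‖∑ i, f (rep i)‖ := by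
        rw [hsplit]
        have : ‖S₁‖ ≤ ‖S₁ + S₂‖ + ‖S₂‖ := by
          calc ‖S₁‖ = ‖(S₁ + S₂) - S₂‖ := by ring_nf
            _ ≤ ‖S₁ + S₂‖ + ‖S₂‖ := norm_sub_le _ _
        linarith
      have hμnorm : ‖μ‖ = (n : ℝ)⁻¹ * ‖∑ i, f (rep i)‖ := by
        rw [hμdef, norm_mul, norm_inv, Complex.norm_natCast]
      rw [hμnorm]
      have hnval : (n : ℝ) = (m₀ : ℝ) + 1 + (k : ℝ) := by
        rw [hn]; push_cast; ring
      have harith : ((m₀ : ℝ) + 1 + (k : ℝ)) * (δ / 4)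
          ≤ ((m₀ : ℝ) + 1) * (δ - ε) - (k : ℝ) * M := by
        have hm : (k : ℝ) * (4 * M + δ) ≤ (m₀ : ℝ) * δ := by
          rw [div_le_iff₀ hδ] at hm₀R
          linarith
        nlinarith
      have h5 : ((m₀ : ℝ) + 1 + (k : ℝ)) * (δ / 4) ≤ ‖∑ i, f (rep i)‖ :=
        le_trans harith hSig
      rw [← hnval] at h5
      calc δ / 4 = (n : ℝ)⁻¹ * ((n : ℝ) * (δ / 4)) := by field_simp
        _ ≤ (n : ℝ)⁻¹ * ‖∑ i, f (rep i)‖ := by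
            exact mul_le_mul_of_nonneg_left (by linarith [h5]) (by positivity)
    exact ⟨μ, hμlow, g, hgV, hgnorm⟩
  -- conclude: const 1 ∈ V
  have h1V : ContinuousMap.const X (1 : ℂ) ∈ V := by
    have : ContinuousMap.const X (1 : ℂ) ∈ closure (V : Set C(X, ℂ)) := by
      rw [Metric.mem_closure_iff]
      intro r hr
      have hε0 : 0 < min (δ / 2) (δ * r / 8) := lt_min (by positivity) (by positivity)
      obtain ⟨μ, hμn, g, hgV, hgn⟩ := key _ hε0 (min_le_left _ _)
      have hμ0 : μ ≠ 0 := by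
        intro h
        rw [h, norm_zero] at hμn
        linarith
      refine ⟨μ⁻¹ • g, Submodule.smul_mem _ _ hgV, ?_⟩
      have heq : ContinuousMap.const X (1 : ℂ) = μ⁻¹ • ContinuousMap.const X μ := by
        ext x
        simp [inv_mul_cancel₀ hμ0]
      rw [heq, dist_eq_norm, ← smul_sub, norm_smul, norm_inv]
      have h1 : ‖ContinuousMap.const X μ - g‖ ≤ min (δ / 2) (δ * r / 8) := by
        rw [norm_sub_rev]; exact hgn
      have h2 : ‖μ‖⁻¹ ≤ (δ / 4)⁻¹ := by
        apply inv_anti₀ (by positivity) hμn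
      have h3 : ‖μ‖⁻¹ * ‖ContinuousMap.const X μ - g‖ ≤ (δ / 4)⁻¹ * (δ * r / 8) := by
        apply mul_le_mul h2 (le_trans h1 (min_le_right _ _)) (norm_nonneg _) (by positivity)
      have h4 : (δ / 4)⁻¹ * (δ * r / 8) = r / 2 := by field_simp; ring
      calc ‖μ‖⁻¹ * ‖ContinuousMap.const X μ - g‖ ≤ (δ / 4)⁻¹ * (δ * r / 8) := h3
        _ = r / 2 := h4
        _ < r := by linarith
    rwa [← SetLike.mem_coe, ← hclosed.closure_eq]
  intro c
  have : ContinuousMap.const X c = c • ContinuousMap.const X (1 : ℂ) := by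
    ext x
    simp
  rw [this]
  exact Submodule.smul_mem _ _ h1V
end

section
/- Let Γ = ∗_{i∈ℕ} Γ_i be the free product of a countably infinite family of countable groups, each containing an element of infinite order, and let α ∈ S(Γ,X) be an action on the Cantor set X satisfying property R. Then α is a boundary in Furstenberg's sense: for every Borel probability measure ν on X and every point x ∈ X, the Dirac measure δ_x lies in the weak* closure of the orbit {(α_s)_*ν : s ∈ Γ} in the space of Borel probability measures on X. -/
open TopologicalSpace
open scoped Fin.NatCast Fin.CommRing

open Filter Topology Set

section Aux

variable {X : Type*} [TopologicalSpace X]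

lemma homeo_coe_mul (f g : X ≃ₜ X) : ⇑(f * g) = ⇑f ∘ ⇑g := rfl

lemma homeo_coe_one : ⇑(1 : X ≃ₜ X) = id := rfl

lemma pow_image {n : ℕ} (φ : X ≃ₜ X) (Ufam : Fin (n+1) → Set X)
    (h : ∀ j, φ '' Ufam j = Ufam (j + 1)) :
    ∀ (k : ℕ) (j : Fin (n+1)), (φ ^ k) '' Ufam j = Ufam (j + (k : Fin (n+1))) := by
  intro k
  induction k with
  | zero => intro j; simp [homeo_coe_one]
  | succ k ih =>
    intro j
    have h1 : ⇑(φ ^ (k+1)) = ⇑(φ ^ k) ∘ ⇑φ := by rw [pow_succ]; rfl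
    have : (φ ^ (k+1)) '' Ufam j = (φ ^ k) '' (φ '' Ufam j) := by
      rw [h1, Set.image_comp]
    rw [this, h j, ih (j+1)]
    have hc : j + 1 + (k : Fin (n+1)) = j + ((k+1 : ℕ) : Fin (n+1)) := by push_cast; ring
    rw [hc]

variable [T2Space X] [CompactSpace X] [TotallyDisconnectedSpace X] [PerfectSpace X]

lemma exists_two_points {W : Set X} (hW : IsOpen W) (hne : W.Nonempty) :
    ∃ y ∈ W, ∃ z ∈ W, y ≠ z := by
  obtain ⟨y, hy⟩ := hne
  have h1 : W ∈ 𝓝[≠] y := mem_nhdsWithin_of_mem_nhds (hW.mem_nhds hy)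
  have h2 : ({y}ᶜ : Set X) ∈ 𝓝[≠] y := self_mem_nhdsWithin
  obtain ⟨z, hzW, hzy⟩ := Filter.nonempty_of_mem ((𝓝[≠] y).inter_mem h1 h2)
  exact ⟨y, hy, z, hzW, fun h => hzy (by simp [h.symm])⟩

lemma exists_disjoint_clopen_family (k : ℕ) :
    ∀ (W : Set X), IsClopen W → W.Nonempty →
    ∃ U : Fin k → Set X, (∀ i, IsClopen (U i)) ∧ (∀ i, (U i).Nonempty) ∧
      (∀ i, U i ⊆ W) ∧ Pairwise (Function.onFun Disjoint U) := by
  induction k with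
  | zero =>
    exact fun W _ _ => ⟨fun i => i.elim0, fun i => i.elim0, fun i => i.elim0,
      fun i => i.elim0, fun i => i.elim0⟩
  | succ k ih =>
    intro W hW hne
    obtain ⟨y, hy, z, hz, hyz⟩ := exists_two_points hW.isOpen hne
    obtain ⟨C, hC, hzC, hCy⟩ :=
      compact_exists_isClopen_in_isOpen (isOpen_compl_singleton (x := y))
        (Set.mem_compl_singleton_iff.mpr (Ne.symm hyz))
    obtain ⟨U, hUc, hUne, hUsub, hUdisj⟩ := ih (W ∩ C) (hW.inter hC) ⟨z, hz, hzC⟩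
    have key : ∀ i : Fin k, Disjoint (W ∩ Cᶜ) (U i) := fun i =>
      (disjoint_compl_left (a := C)).mono (Set.inter_subset_right)
        ((hUsub i).trans Set.inter_subset_right)
    refine ⟨Fin.cons (W ∩ Cᶜ) U, ?_, ?_, ?_, ?_⟩
    · intro i
      rcases Fin.eq_zero_or_eq_succ i with rfl | ⟨j, rfl⟩
      · simpa using hW.inter hC.compl
      · simpa using hUc j
    · intro i
      rcases Fin.eq_zero_or_eq_succ i with rfl | ⟨j, rfl⟩
      · exact ⟨y, hy, fun h => (hCy h) rfl⟩
      · simpa using hUne j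
    · intro i
      rcases Fin.eq_zero_or_eq_succ i with rfl | ⟨j, rfl⟩
      · simpa using Set.inter_subset_left
      · simpa using (hUsub j).trans Set.inter_subset_left
    · intro i j hij
      rcases Fin.eq_zero_or_eq_succ i with rfl | ⟨i', rfl⟩ <;>
        rcases Fin.eq_zero_or_eq_succ j with rfl | ⟨j', rfl⟩
      · exact absurd rfl hij
      · simpa [Function.onFun] using key j'
      · simpa [Function.onFun] using (key i').symm
      · have : i' ≠ j' := fun h => hij (by rw [h])
        simpa [Function.onFun] using hUdisj this

end Aux


open MeasureTheory

open MeasureTheory ENNReal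

lemma exists_push_small
    {G : ℕ → Type*} [∀ i, Group (G i)] {X : Type*} [TopologicalSpace X] [T2Space X]
    [CompactSpace X] [TotallyDisconnectedSpace X] [PerfectSpace X]
    [MeasurableSpace X] [BorelSpace X]
    (α : Monoid.CoprodI G →* (X ≃ₜ X)) (hR : PropertyR α)
    (ν : ProbabilityMeasure X) (V : Set X) (hV : IsClopen V) (hVne : V.Nonempty)
    (hVc : Vᶜ.Nonempty) (n : ℕ) :
    ∃ s : Monoid.CoprodI G, (ν : Measure X).map (α s) V ≤ (((n : ℝ≥0∞)) + 1)⁻¹ := by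
  obtain ⟨U, hUc, hUne, hUsub, hUdisj⟩ :=
    exists_disjoint_clopen_family n Vᶜ hV.compl hVc
  set F : Fin (n+1) → Set X := Fin.cons V U with hF
  have hF0 : F 0 = V := rfl
  have hFc : ∀ i, IsClopen (F i) := by
    intro i
    rcases Fin.eq_zero_or_eq_succ i with rfl | ⟨j, rfl⟩
    · exact hV
    · simpa [hF] using hUc j
  have hFne : ∀ i, (F i).Nonempty := by
    intro i
    rcases Fin.eq_zero_or_eq_succ i with rfl | ⟨j, rfl⟩
    · exact hVne
    · simpa [hF] using hUne j
  have hFproper : ∀ i, F i ≠ Set.univ := by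
    intro i
    rcases Fin.eq_zero_or_eq_succ i with rfl | ⟨j, rfl⟩
    · intro h
      obtain ⟨w, hw⟩ := hVc
      rw [hF0] at h
      exact hw (h ▸ Set.mem_univ w)
    · intro h
      obtain ⟨v, hv⟩ := hVne
      have : v ∈ F j.succ := h ▸ Set.mem_univ v
      exact (hUsub j (by simpa [hF] using this)) hv
  have hFdisj : Pairwise (Function.onFun Disjoint F) := by
    have key : ∀ j : Fin n, Disjoint V (U j) :=
      fun j => (Set.disjoint_compl_right_iff_subset.mpr le_rfl).mono_right (hUsub j)
    intro i j hij
    rcases Fin.eq_zero_or_eq_succ i with rfl | ⟨i', rfl⟩ <;>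
      rcases Fin.eq_zero_or_eq_succ j with rfl | ⟨j', rfl⟩
    · exact absurd rfl hij
    · simpa [Function.onFun, hF] using key j'
    · simpa [Function.onFun, hF] using (key i').symm
    · have : i' ≠ j' := fun h => hij (by rw [h])
      simpa [Function.onFun, hF] using hUdisj this
  obtain ⟨i, s₀, -, himg⟩ := (hR (n+1) F hFc hFne hFproper hFdisj).nonempty
  set φ : X ≃ₜ X := α (Monoid.CoprodI.of s₀) with hφ
  -- pick the piece of smallest measure
  obtain ⟨j₀, -, hj₀⟩ := Finset.exists_min_image Finset.univ
    (fun j : Fin (n+1) => (ν : Measure X) (F j)) ⟨0, Finset.mem_univ 0⟩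
  have hmeas : ∀ j : Fin (n+1), MeasurableSet (F j) := fun j => (hFc j).isOpen.measurableSet
  have hsum : ∑ j : Fin (n+1), (ν : Measure X) (F j) ≤ 1 := by
    have := measure_iUnion (μ := (ν : Measure X)) hFdisj hmeas
    rw [tsum_fintype] at this
    rw [← this]
    calc (ν : Measure X) (⋃ j, F j) ≤ (ν : Measure X) Set.univ :=
          measure_mono (Set.subset_univ _)
      _ = 1 := measure_univ
  have hcard : ((n+1 : ℕ) : ℝ≥0∞) * (ν : Measure X) (F j₀) ≤ 1 := by
    have h2 := Finset.card_nsmul_le_sum Finset.univ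
      (fun j : Fin (n+1) => (ν : Measure X) (F j)) ((ν : Measure X) (F j₀))
      (fun j _ => hj₀ j (Finset.mem_univ j))
    simp only [Finset.card_univ, Fintype.card_fin, nsmul_eq_mul] at h2
    exact h2.trans hsum
  have hsmall : (ν : Measure X) (F j₀) ≤ (((n : ℝ≥0∞)) + 1)⁻¹ := by
    rw [ENNReal.le_inv_iff_mul_le, mul_comm]
    have : ((n : ℝ≥0∞) + 1) = ((n+1 : ℕ) : ℝ≥0∞) := by push_cast; ring
    rw [this]
    exact hcard
  -- push forward by φ^k where k brings j₀ to 0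
  set k : ℕ := (n+1) - (j₀ : ℕ) with hk
  refine ⟨(Monoid.CoprodI.of s₀) ^ k, ?_⟩
  have hαpow : α ((Monoid.CoprodI.of s₀) ^ k) = φ ^ k := by rw [map_pow]
  have hidx : j₀ + (k : Fin (n+1)) = 0 := by
    have h1 : ((j₀ : ℕ) : Fin (n+1)) = j₀ := Fin.cast_val_eq_self j₀
    rw [← h1, ← Nat.cast_add, Nat.add_sub_cancel' (le_of_lt j₀.isLt), Fin.natCast_self]
  have himage : (φ ^ k) '' F j₀ = V := by
    rw [pow_image φ F himg k j₀, hidx, hF0]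
  have hpre : (⇑(φ ^ k)) ⁻¹' V = F j₀ := by
    rw [← himage, Set.preimage_image_eq _ (φ ^ k).injective]
  rw [Measure.map_apply (α ((Monoid.CoprodI.of s₀) ^ k)).continuous.measurable
    hV.isOpen.measurableSet, hαpow, hpre]
  exact hsmall

open MeasureTheory

/-- Let `Γ = ∗_{i∈ℕ} G i` be the free product of countably many countable groups,
each containing an element of infinite order, and let `α` be a Cantor system of `Γ`
with property `R`. Then `α` is a boundary in Furstenberg's sense: for every Borel
probability measure `ν` on `X` and every `x ∈ X`, the Dirac measure `δ_x` lies in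
the weak* closure of the orbit `{(α_s)_* ν : s ∈ Γ}`. -/
theorem propertyR_implies_boundary (G : ℕ → Type*) [∀ i, Group (G i)]
    [∀ i, Countable (G i)] (htf : ∀ i, ∃ s : G i, ¬ IsOfFinOrder s)
    (X : Type*) [TopologicalSpace X] [CompactSpace X] [MetrizableSpace X]
    [TotallyDisconnectedSpace X] [PerfectSpace X] [Nonempty X]
    [MeasurableSpace X] [BorelSpace X]
    (α : Monoid.CoprodI G →* (X ≃ₜ X)) (hR : PropertyR α)
    (ν : ProbabilityMeasure X) (x : X) :
    (⟨Measure.dirac x, Measure.dirac.isProbabilityMeasure⟩ : ProbabilityMeasure X) ∈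
      closure {m : ProbabilityMeasure X | ∃ s : Monoid.CoprodI G,
        m = ν.map (f := α s) (α s).continuous.measurable.aemeasurable} := by
  set δ : ProbabilityMeasure X := ⟨Measure.dirac x, Measure.dirac.isProbabilityMeasure⟩ with hδ
  obtain ⟨y, hy⟩ := Filter.nonempty_of_mem (self_mem_nhdsWithin : ({x}ᶜ : Set X) ∈ 𝓝[≠] x)
  have hWex : ∃ W : ℕ → Set X, (∀ n, IsClopen (W n)) ∧ (∀ n, x ∈ W n) ∧ (∀ n, y ∉ W n) ∧
      (∀ Gs ∈ 𝓝 x, ∀ᶠ n in Filter.atTop, W n ⊆ Gs) := by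
    letI : MetricSpace X := TopologicalSpace.metrizableSpaceMetric X
    have hWn : ∀ n : ℕ, ∃ W : Set X,
        IsClopen W ∧ x ∈ W ∧ W ⊆ Metric.ball x (1/(n+1)) ∧ y ∉ W := by
      intro n
      have hopen : IsOpen (Metric.ball x (1/(n+1)) ∩ {y}ᶜ) :=
        Metric.isOpen_ball.inter isOpen_compl_singleton
      have hx : x ∈ Metric.ball x (1/(n+1)) ∩ {y}ᶜ := by
        refine ⟨Metric.mem_ball_self (by positivity), ?_⟩
        simp only [Set.mem_compl_iff, Set.mem_singleton_iff]
        intro h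
        exact hy (by simp [h])
      obtain ⟨W, hWc, hxW, hWsub⟩ := compact_exists_isClopen_in_isOpen hopen hx
      exact ⟨W, hWc, hxW, hWsub.trans Set.inter_subset_left, fun h => (hWsub h).2 rfl⟩
    choose W hWc hxW hWball hyW using hWn
    refine ⟨W, hWc, hxW, hyW, ?_⟩
    intro Gs hGs
    obtain ⟨ε, hε, hball⟩ := Metric.mem_nhds_iff.mp hGs
    obtain ⟨N₁, hN₁⟩ := exists_nat_one_div_lt (K := ℝ) hε
    filter_upwards [Filter.eventually_ge_atTop N₁] with n h1
    refine (hWball n).trans (le_trans (Metric.ball_subset_ball ?_) hball)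
    calc (1 : ℝ)/(n+1) ≤ 1/(N₁+1) := by
          apply one_div_le_one_div_of_le (by positivity)
          exact_mod_cast Nat.succ_le_succ h1
      _ ≤ ε := hN₁.le
  obtain ⟨W, hWc, hxW, hyW, hWnhds⟩ := hWex
  have hVclop : ∀ n, IsClopen (W n)ᶜ := fun n => (hWc n).compl
  have hVne : ∀ n, ((W n)ᶜ).Nonempty := fun n => ⟨y, hyW n⟩
  have hVcc : ∀ n, (((W n)ᶜ)ᶜ).Nonempty := fun n => ⟨x, by simp [hxW n]⟩
  choose s hs using fun n => exists_push_small α hR ν _ (hVclop n) (hVne n) (hVcc n) n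
  set m : ℕ → ProbabilityMeasure X := fun n =>
    ν.map (f := α (s n)) (α (s n)).continuous.measurable.aemeasurable with hm
  have hsmall : ∀ n, (m n : Measure X) ((W n)ᶜ) ≤ ((n : ℝ≥0∞) + 1)⁻¹ := by
    intro n
    have : (m n : Measure X) = (ν : Measure X).map (α (s n)) := by
      rw [hm]; exact ProbabilityMeasure.toMeasure_map ν _
    rw [this]
    exact hs n
  refine mem_closure_of_tendsto (X := ProbabilityMeasure X) (f := m) (b := Filter.atTop)
    (MeasureTheory.tendsto_of_forall_isOpen_le_liminf ?_)
    (Filter.Eventually.of_forall fun n => ⟨s n, rfl⟩)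
  intro Gs hGs
  by_cases hxG : x ∈ Gs
  · refine le_trans (ProbabilityMeasure.apply_le_one _ _) ?_
    by_contra hlt
    push_neg at hlt
    obtain ⟨c, hc1, hc2⟩ := exists_between hlt
    have hcob : Filter.IsCoboundedUnder (· ≥ ·) Filter.atTop (fun n => m n Gs) :=
      Filter.IsBoundedUnder.isCoboundedUnder_ge
        (Filter.isBoundedUnder_of ⟨1, fun n => ProbabilityMeasure.apply_le_one _ _⟩)
    have hev : ∀ᶠ n in Filter.atTop, c ≤ m n Gs := by
      have hcne : (1 : ℝ≥0∞) - (c : ℝ≥0∞) ≠ 0 := by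
        refine (tsub_pos_of_lt ?_).ne'
        exact_mod_cast hc2
      obtain ⟨N₂, hN₂⟩ := ENNReal.exists_inv_nat_lt hcne
      filter_upwards [hWnhds Gs (hGs.mem_nhds hxG), Filter.eventually_ge_atTop N₂]
        with n hWG h2
      have h3 : ((n : ℝ≥0∞) + 1)⁻¹ ≤ 1 - (c : ℝ≥0∞) := by
        calc ((n : ℝ≥0∞) + 1)⁻¹ ≤ ((N₂ : ℝ≥0∞))⁻¹ := by
              apply ENNReal.inv_le_inv'
              calc (N₂ : ℝ≥0∞) ≤ (n : ℝ≥0∞) := by exact_mod_cast h2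
                _ ≤ (n : ℝ≥0∞) + 1 := le_self_add
          _ ≤ 1 - c := hN₂.le
      rw [← ENNReal.coe_le_coe, ProbabilityMeasure.ennreal_coeFn_eq_coeFn_toMeasure]
      calc (c : ℝ≥0∞) ≤ 1 - ((n : ℝ≥0∞) + 1)⁻¹ := by
            refine ENNReal.le_sub_of_add_le_right (by simp) ?_
            calc (c : ℝ≥0∞) + ((n : ℝ≥0∞) + 1)⁻¹ ≤ c + (1 - c) := add_le_add_right h3 _
              _ = 1 := by
                  rw [add_comm, tsub_add_cancel_of_le
                    (show (c : ℝ≥0∞) ≤ 1 by exact_mod_cast hc2.le)]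
        _ ≤ 1 - (m n : Measure X) ((W n)ᶜ) := tsub_le_tsub_left (hsmall n) 1
        _ = (m n : Measure X) (W n) := by
            have hcomp := measure_compl (μ := (m n : Measure X))
              (hVclop n).isOpen.measurableSet (measure_ne_top _ _)
            rw [compl_compl, measure_univ] at hcomp
            exact hcomp.symm
        _ ≤ (m n : Measure X) Gs := measure_mono hWG
    exact absurd (Filter.le_liminf_of_le hcob hev) (not_le.mpr hc1)
  · have h0 : δ Gs = 0 := by
      have hd : (Measure.dirac x) Gs = 0 := by
        rw [Measure.dirac_apply' _ hGs.measurableSet]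
        simp [hxG]
      have h1 := MeasureTheory.ProbabilityMeasure.ennreal_coeFn_eq_coeFn_toMeasure δ Gs
      rw [show δ.toMeasure = Measure.dirac x from rfl, hd] at h1
      exact_mod_cast h1
    rw [h0]
    exact zero_le
end

section
/- Let Λ₁ and Λ₂ be groups and Λ := Λ₁ ∗ Λ₂ their free product. Let s ∈ Λ₁ and t ∈ Λ₂ be elements of infinite order. Then for any finite subset F of Λ∖{e}, there exist a partition Λ = D ⊔ E and elements u₁, u₂, u₃ of the subgroup of Λ generated by s and t such that (1) fD ∩ D = ∅ for all f ∈ F, and (2) u_j E ∩ u_k E = ∅ for any two distinct j, k ∈ {1,2,3}. -/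
open Monoid Monoid.CoprodI

namespace PowersAux

universe u
variable {Λ₁ Λ₂ : Type u} [Group Λ₁] [Group Λ₂]

/-- The Bool-indexed family: `false ↦ Λ₁`, `true ↦ Λ₂`. -/
abbrev GG (Λ₁ Λ₂ : Type u) : Bool → Type u := fun b => cond b Λ₂ Λ₁

instance : ∀ b, Group (GG Λ₁ Λ₂ b) := fun b =>
  Bool.rec (inferInstanceAs (Group Λ₁)) (inferInstanceAs (Group Λ₂)) b

noncomputable instance (b : Bool) : DecidableEq (GG Λ₁ Λ₂ b) := Classical.decEq _

/-- The forward homomorphism. -/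
def ψ : Coprod Λ₁ Λ₂ →* CoprodI (GG Λ₁ Λ₂) :=
  Coprod.lift (@CoprodI.of Bool (GG Λ₁ Λ₂) _ false) (@CoprodI.of Bool (GG Λ₁ Λ₂) _ true)

/-- The backward homomorphism. -/
def χ : CoprodI (GG Λ₁ Λ₂) →* Coprod Λ₁ Λ₂ :=
  CoprodI.lift (fun b => Bool.rec (motive := fun b => GG Λ₁ Λ₂ b →* Coprod Λ₁ Λ₂)
    Coprod.inl Coprod.inr b)

lemma chi_psi : (χ (Λ₁ := Λ₁) (Λ₂ := Λ₂)).comp ψ = MonoidHom.id _ := by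
  apply Coprod.hom_ext <;> ext x <;>
    simp only [ψ, χ, MonoidHom.comp_apply, Coprod.lift_apply_inl, Coprod.lift_apply_inr,
      MonoidHom.id_apply] <;> exact CoprodI.lift_of _ _

lemma psi_chi : (ψ (Λ₁ := Λ₁) (Λ₂ := Λ₂)).comp χ = MonoidHom.id _ := by
  apply CoprodI.ext_hom
  intro i
  cases i <;> ext x <;>
    simp only [ψ, χ, MonoidHom.comp_apply, MonoidHom.id_apply] <;>
    rw [CoprodI.lift_of] <;> rfl

/-- The iso `Λ₁ ∗ Λ₂ ≃* CoprodI (GG Λ₁ Λ₂)`. -/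
noncomputable def e : Coprod Λ₁ Λ₂ ≃* CoprodI (GG Λ₁ Λ₂) :=
  MonoidHom.toMulEquiv ψ χ chi_psi psi_chi

lemma e_inl (a : Λ₁) : e (Coprod.inl a) = @CoprodI.of Bool (GG Λ₁ Λ₂) _ false a := by
  simp [e, MonoidHom.toMulEquiv, ψ]

lemma e_inr (a : Λ₂) : e (Coprod.inr a) = @CoprodI.of Bool (GG Λ₁ Λ₂) _ true a := by
  simp [e, MonoidHom.toMulEquiv, ψ]

lemma neword_prod_ne_one {i j : Bool} (w : NeWord (GG Λ₁ Λ₂) i j) : w.prod ≠ 1 := by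
  intro h
  have h2 : Word.equiv.symm w.toWord = Word.equiv.symm Word.empty := by
    show w.toWord.prod = Word.prod Word.empty
    rw [Word.prod_empty]; exact h
  have := Word.equiv.symm.injective h2
  exact w.toList_ne_nil (congrArg Word.toList this)

lemma neword_head_idx_eq {i j i' j' : Bool} (w : NeWord (GG Λ₁ Λ₂) i j)
    (w' : NeWord (GG Λ₁ Λ₂) i' j') (h : w.prod = w'.prod) : i = i' := by
  have h2 : Word.equiv.symm w.toWord = Word.equiv.symm w'.toWord := h
  have h3 : w.toWord = w'.toWord := Word.equiv.symm.injective h2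
  have h4 : w.toList.head? = w'.toList.head? := by
    have : w.toWord.toList = w'.toWord.toList := by rw [h3]
    simpa [NeWord.toWord] using congrArg List.head? this
  rw [w.toList_head?, w'.toList_head?] at h4
  exact congrArg Sigma.fst (Option.some_injective _ h4)

/-- The ping-pong set: elements represented by a word starting in `Λ₁`. -/
def D0 (Λ₁ Λ₂ : Type u) [Group Λ₁] [Group Λ₂] : Set (CoprodI (GG Λ₁ Λ₂)) :=
  {x | ∃ (j : Bool) (w : NeWord (GG Λ₁ Λ₂) false j), w.prod = x}

lemma exists_neword (x : CoprodI (GG Λ₁ Λ₂)) (hx : x ≠ 1) :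
    ∃ (i j : Bool) (w : NeWord (GG Λ₁ Λ₂) i j), w.prod = x := by
  have hne : Word.equiv x ≠ Word.empty := by
    intro h
    apply hx
    have := congrArg Word.equiv.symm h
    rw [Word.equiv.symm_apply_apply] at this
    exact this.trans Word.prod_empty
  obtain ⟨i, j, w, hw⟩ := NeWord.of_word (Word.equiv x) hne
  refine ⟨i, j, w, ?_⟩
  have : w.prod = (Word.equiv x).prod := by rw [NeWord.prod, hw]
  rw [this]
  exact Word.equiv.symm_apply_apply x

lemma true_mul_notmem_D0 (w : NeWord (GG Λ₁ Λ₂) true true)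
    {x : CoprodI (GG Λ₁ Λ₂)} (hx : x ∈ D0 Λ₁ Λ₂) : w.prod * x ∉ D0 Λ₁ Λ₂ := by
  obtain ⟨j', w', rfl⟩ := hx
  rintro ⟨j'', w'', hw''⟩
  have : w''.prod = (NeWord.append w (by simp) w').prod := by
    rw [hw'']; simp
  exact Bool.noConfusion (neword_head_idx_eq w'' _ this)

lemma of_mul_mem_D0 (a : Λ₁) (ha : a ≠ 1) {x : CoprodI (GG Λ₁ Λ₂)}
    (hx : x ∉ D0 Λ₁ Λ₂) : CoprodI.of (i := false) a * x ∈ D0 Λ₁ Λ₂ := by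
  by_cases h1 : x = 1
  · subst h1
    exact ⟨false, NeWord.singleton a ha, by simp⟩
  · obtain ⟨i, j, w, rfl⟩ := exists_neword x h1
    cases i with
    | false => exact absurd ⟨j, w, rfl⟩ hx
    | true => exact ⟨j, NeWord.append (NeWord.singleton a ha) (by simp) w, by simp⟩

/-- Multiply a `NeWord` on the right. -/
def mulLast {i j : Bool} (w : NeWord (GG Λ₁ Λ₂) i j) (x : GG Λ₁ Λ₂ j)
    (h : w.last * x ≠ 1) : NeWord (GG Λ₁ Λ₂) j i :=
  NeWord.mulHead w.inv x⁻¹ (by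
    rw [NeWord.inv_head, ← mul_inv_rev]
    exact inv_ne_one.2 h)

lemma mulLast_prod {i j : Bool} (w : NeWord (GG Λ₁ Λ₂) i j) (x : GG Λ₁ Λ₂ j)
    (h : w.last * x ≠ 1) : (mulLast w x h).inv.prod = w.prod * CoprodI.of x := by
  rw [NeWord.inv_prod, mulLast, NeWord.mulHead_prod, NeWord.inv_prod, mul_inv_rev, inv_inv]
  simp

/-- Coerce `Λ₂` into `GG Λ₁ Λ₂ true`. -/
def up2 (a : Λ₂) : GG Λ₁ Λ₂ true := a

lemma exists_conj (t : Λ₂) (ht : ¬ IsOfFinOrder t) (f : CoprodI (GG Λ₁ Λ₂)) (hf : f ≠ 1) :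
    ∃ N : Set ℕ, N.Finite ∧ ∀ n ∉ N, 0 < n →
      ∃ w : NeWord (GG Λ₁ Λ₂) true true,
        w.prod = CoprodI.of (i := true) (t ^ n) * f * (CoprodI.of (i := true) (t ^ n))⁻¹ := by
  have hinj : Function.Injective (fun n : ℕ => t ^ n) :=
    injective_pow_iff_not_isOfFinOrder.2 ht
  have hpow : ∀ n : ℕ, 0 < n → (t ^ n : Λ₂) ≠ 1 := by
    intro n hn h
    exact ht (isOfFinOrder_iff_pow_eq_one.2 ⟨n, hn, h⟩)
  obtain ⟨i, j, w, rfl⟩ := exists_neword f hf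
  cases i with
  | false =>
    cases j with
    | false =>
      refine ⟨∅, Set.finite_empty, fun n _ hn => ?_⟩
      have htn : (t ^ n : Λ₂) ≠ 1 := hpow n hn
      refine ⟨.append (.append (.singleton (i := true) (t ^ n) htn) (by simp) w) (by simp)
        (.singleton (i := true) (t ^ n)⁻¹ (inv_ne_one.2 htn)), ?_⟩
      simp [NeWord.append_prod, map_inv, mul_assoc]
    | true =>
      refine ⟨(fun n : ℕ => t ^ n) ⁻¹' {w.last}, Set.Finite.preimage
        (Set.injOn_of_injective hinj) (Set.finite_singleton _), fun n hnB hn => ?_⟩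
      have htn : (t ^ n : Λ₂) ≠ 1 := hpow n hn
      have hlast : w.last * (up2 (t ^ n))⁻¹ ≠ 1 := by
        intro h
        exact hnB (by simpa [eq_comm, up2] using (mul_inv_eq_one.1 h))
      refine ⟨.append (.singleton (i := true) (t ^ n) htn) (by simp)
        ((mulLast w (up2 (t ^ n))⁻¹ hlast).inv), ?_⟩
      rw [NeWord.append_prod, NeWord.prod_singleton, mulLast_prod]
      simp [up2, map_inv, map_pow, mul_assoc]
  | true =>
    cases j with
    | false =>
      refine ⟨(fun n : ℕ => t ^ n) ⁻¹' {(w.head)⁻¹}, Set.Finite.preimage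
        (Set.injOn_of_injective hinj) (Set.finite_singleton _), fun n hnB hn => ?_⟩
      have htn : (t ^ n : Λ₂) ≠ 1 := hpow n hn
      have hhead : up2 (t ^ n) * w.head ≠ 1 := by
        intro h
        exact hnB (by simpa [eq_comm, up2] using (mul_eq_one_iff_eq_inv.1 h))
      refine ⟨.append (NeWord.mulHead w (up2 (t ^ n)) hhead) (by simp)
        (.singleton (i := true) (t ^ n)⁻¹ (inv_ne_one.2 htn)), ?_⟩
      rw [NeWord.append_prod, NeWord.mulHead_prod, NeWord.prod_singleton]
      simp [up2, map_inv, map_pow, mul_assoc]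
    | true =>
      cases w with
      | singleton x hx =>
        refine ⟨∅, Set.finite_empty, fun n _ hn => ?_⟩
        have htn : (t ^ n : Λ₂) ≠ 1 := hpow n hn
        have hconj : up2 (t ^ n) * x * (up2 (t ^ n))⁻¹ ≠ 1 := by
          intro h
          apply hx
          have : x = (up2 (t ^ n))⁻¹ * (up2 (t ^ n) * x * (up2 (t ^ n))⁻¹) * (up2 (t ^ n)) := by group
          rw [this, h]
          group
        refine ⟨.singleton (i := true) (up2 (t ^ n) * x * (up2 (t ^ n))⁻¹) hconj, ?_⟩
        simp [up2, map_mul, map_inv]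
      | append w₁ hne w₂ =>
        refine ⟨(fun n : ℕ => t ^ n) ⁻¹' {(w₁.head)⁻¹, w₂.last}, Set.Finite.preimage
          (Set.injOn_of_injective hinj) (by simp), fun n hnB hn => ?_⟩
        rw [Set.mem_preimage, Set.mem_insert_iff, Set.mem_singleton_iff, not_or] at hnB
        have htn : (t ^ n : Λ₂) ≠ 1 := hpow n hn
        have hhead : up2 (t ^ n) * w₁.head ≠ 1 := by
          intro h
          exact hnB.1 (by simpa [eq_comm, up2] using (mul_eq_one_iff_eq_inv.1 h))
        have hlast : w₂.last * (up2 (t ^ n))⁻¹ ≠ 1 := by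
          intro h
          exact hnB.2 (by simpa [eq_comm, up2] using (mul_inv_eq_one.1 h))
        refine ⟨.append (NeWord.mulHead w₁ (up2 (t ^ n)) hhead) hne
          ((mulLast w₂ (up2 (t ^ n))⁻¹ hlast).inv), ?_⟩
        rw [NeWord.append_prod, NeWord.mulHead_prod, mulLast_prod, NeWord.append_prod]
        simp [up2, map_inv, map_pow, mul_assoc]


theorem main_aux {Λ₁ Λ₂ : Type u} [Group Λ₁] [Group Λ₂]
    (s : Λ₁) (hs : ¬ IsOfFinOrder s) (t : Λ₂) (ht : ¬ IsOfFinOrder t)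
    (F : Finset (Monoid.Coprod Λ₁ Λ₂)) (hF : ∀ f ∈ F, f ≠ 1) :
    ∃ D E : Set (Monoid.Coprod Λ₁ Λ₂), D ∪ E = Set.univ ∧ Disjoint D E ∧
      ∃ u : Fin 3 → Monoid.Coprod Λ₁ Λ₂,
        (∀ j, u j ∈ Subgroup.closure {Monoid.Coprod.inl s, Monoid.Coprod.inr t}) ∧
        (∀ f ∈ F, Disjoint ((fun d => f * d) '' D) D) ∧
        ∀ j k : Fin 3, j ≠ k →
          Disjoint ((fun d => u j * d) '' E) ((fun d => u k * d) '' E) := by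
  classical
  have hsinj : Function.Injective (fun n : ℕ => s ^ n) :=
    injective_pow_iff_not_isOfFinOrder.2 hs
  have hconj : ∀ f : F, ∃ N : Set ℕ, N.Finite ∧ ∀ n ∉ N, 0 < n →
      ∃ w : NeWord (GG Λ₁ Λ₂) true true,
        w.prod = CoprodI.of (i := true) (t ^ n) * e f.1 * (CoprodI.of (i := true) (t ^ n))⁻¹ := by
    intro f
    refine exists_conj t ht (e f.1) ?_
    intro h
    exact hF f.1 f.2 (by simpa using (EmbeddingLike.map_eq_one_iff (f := e)).1 h)
  choose N hNfin hNw using hconj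
  have hfin : ((⋃ f : F, N f) ∪ {0} : Set ℕ).Finite :=
    ((Set.finite_iUnion hNfin).union (Set.finite_singleton 0))
  obtain ⟨n, hn⟩ := hfin.infinite_compl.nonempty
  rw [Set.mem_compl_iff, Set.mem_union, not_or, Set.mem_iUnion] at hn
  have hn0 : 0 < n := Nat.pos_of_ne_zero (by simpa using hn.2)
  have hnN : ∀ f : F, n ∉ N f := fun f hf => hn.1 ⟨f, hf⟩
  set τ : CoprodI (GG Λ₁ Λ₂) := CoprodI.of (i := true) (t ^ n) with hτ
  refine ⟨{x | τ * e x ∈ D0 Λ₁ Λ₂}, {x | τ * e x ∉ D0 Λ₁ Λ₂}, ?_, ?_, ?_⟩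
  · apply Set.eq_univ_iff_forall.2
    intro x
    by_cases h : τ * e x ∈ D0 Λ₁ Λ₂
    · exact Set.mem_union_left _ h
    · exact Set.mem_union_right _ h
  · rw [Set.disjoint_left]
    intro a ha ha'
    exact ha' ha
  refine ⟨fun j => ((Coprod.inr t : Coprod Λ₁ Λ₂) ^ n)⁻¹ *
      (Coprod.inl s : Coprod Λ₁ Λ₂) ^ ((j : ℕ) + 1) * (Coprod.inr t : Coprod Λ₁ Λ₂) ^ n,
    ?_, ?_, ?_⟩
  · intro j
    refine mul_mem (mul_mem (inv_mem (pow_mem (Subgroup.subset_closure ?_) n))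
      (pow_mem (Subgroup.subset_closure ?_) _)) (pow_mem (Subgroup.subset_closure ?_) n)
    · exact Set.mem_insert_of_mem _ rfl
    · exact Set.mem_insert _ _
    · exact Set.mem_insert_of_mem _ rfl
  · intro f hf
    rw [Set.disjoint_left]
    rintro a ⟨x, hx, rfl⟩ hfx
    obtain ⟨w, hw⟩ := hNw ⟨f, hf⟩ n (hnN ⟨f, hf⟩) hn0
    have hx' : τ * e x ∈ D0 Λ₁ Λ₂ := hx
    have hfx' : τ * e (f * x) ∈ D0 Λ₁ Λ₂ := hfx
    have hkey : τ * e (f * x) = w.prod * (τ * e x) := by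
      rw [hw, map_mul, hτ]
      group
    rw [hkey] at hfx'
    exact true_mul_notmem_D0 w hx' hfx'
  · intro j k hjk
    rw [Set.disjoint_left]
    rintro a ⟨x, hx, rfl⟩ ⟨y, hy, hxy⟩
    have hx' : τ * e x ∉ D0 Λ₁ Λ₂ := hx
    have hy' : τ * e y ∉ D0 Λ₁ Λ₂ := hy
    have hτe : ∀ m : Fin 3, ∀ z : Coprod Λ₁ Λ₂,
        τ * e (((Coprod.inr t : Coprod Λ₁ Λ₂) ^ n)⁻¹ *
          (Coprod.inl s : Coprod Λ₁ Λ₂) ^ ((m : ℕ) + 1) * (Coprod.inr t : Coprod Λ₁ Λ₂) ^ n * z)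
        = CoprodI.of (i := false) (s ^ ((m : ℕ) + 1)) * (τ * e z) := by
      intro m z
      have h1 : e ((Coprod.inr t : Coprod Λ₁ Λ₂) ^ n) = τ := by
        rw [map_pow, e_inr, hτ, map_pow]
      have h2 : e ((Coprod.inl s : Coprod Λ₁ Λ₂) ^ ((m : ℕ) + 1))
          = CoprodI.of (i := false) (s ^ ((m : ℕ) + 1)) := by
        rw [map_pow, e_inl, map_pow]
      rw [map_mul, map_mul, map_mul, map_inv, h1, h2]
      group
    have hxy' : ((Coprod.inr t : Coprod Λ₁ Λ₂) ^ n)⁻¹ *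
          (Coprod.inl s : Coprod Λ₁ Λ₂) ^ ((k : ℕ) + 1) * (Coprod.inr t : Coprod Λ₁ Λ₂) ^ n * y
        = ((Coprod.inr t : Coprod Λ₁ Λ₂) ^ n)⁻¹ *
          (Coprod.inl s : Coprod Λ₁ Λ₂) ^ ((j : ℕ) + 1) * (Coprod.inr t : Coprod Λ₁ Λ₂) ^ n * x :=
      hxy
    have heq : CoprodI.of (i := false) (s ^ ((j : ℕ) + 1)) * (τ * e x)
        = CoprodI.of (i := false) (s ^ ((k : ℕ) + 1)) * (τ * e y) := by
      rw [← hτe j x, ← hτe k y, hxy']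
    have hab : (s ^ ((k : ℕ) + 1))⁻¹ * s ^ ((j : ℕ) + 1) ≠ 1 := by
      intro h
      rw [inv_mul_eq_one] at h
      exact hjk (Fin.ext (Nat.succ_injective (hsinj h.symm)))
    have : CoprodI.of (i := false) ((s ^ ((k : ℕ) + 1))⁻¹ * s ^ ((j : ℕ) + 1)) * (τ * e x)
        = τ * e y := by
      rw [map_mul, map_inv, mul_assoc, heq]
      group
    exact hy' (this ▸ of_mul_mem_D0 _ hab hx')

end PowersAux


open PowersAux in
/-- Powers' lemma for free products: let `Λ = Λ₁ ∗ Λ₂` and let `s ∈ Λ₁`, `t ∈ Λ₂` be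
of infinite order. For any finite subset `F ⊆ Λ ∖ {e}` there are a partition
`Λ = D ⊔ E` and elements `u₁, u₂, u₃` of the subgroup generated by `s` and `t` with
`fD ∩ D = ∅` for all `f ∈ F`, and `u_j E ∩ u_k E = ∅` for distinct `j, k`. -/
theorem powers_property_free_product (Λ₁ Λ₂ : Type*) [Group Λ₁] [Group Λ₂]
    (s : Λ₁) (hs : ¬ IsOfFinOrder s) (t : Λ₂) (ht : ¬ IsOfFinOrder t)
    (F : Finset (Monoid.Coprod Λ₁ Λ₂)) (hF : ∀ f ∈ F, f ≠ 1) :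
    ∃ D E : Set (Monoid.Coprod Λ₁ Λ₂), D ∪ E = Set.univ ∧ Disjoint D E ∧
      ∃ u : Fin 3 → Monoid.Coprod Λ₁ Λ₂,
        (∀ j, u j ∈ Subgroup.closure {Monoid.Coprod.inl s, Monoid.Coprod.inr t}) ∧
        (∀ f ∈ F, Disjoint ((fun d => f * d) '' D) D) ∧
        ∀ j k : Fin 3, j ≠ k →
          Disjoint ((fun d => u j * d) '' E) ((fun d => u k * d) '' E) := by
  classical
  -- move both groups in the same universe via `ULift`
  set L₁ := ULift.{max u_1 u_2} Λ₁
  set L₂ := ULift.{max u_1 u_2} Λ₂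
  let upl : Λ₁ →* L₁ := (MulEquiv.ulift (α := Λ₁)).symm.toMonoidHom
  let upr : Λ₂ →* L₂ := (MulEquiv.ulift (α := Λ₂)).symm.toMonoidHom
  let dnl : L₁ →* Λ₁ := (MulEquiv.ulift (α := Λ₁)).toMonoidHom
  let dnr : L₂ →* Λ₂ := (MulEquiv.ulift (α := Λ₂)).toMonoidHom
  let κhom : Coprod Λ₁ Λ₂ →* Coprod L₁ L₂ := Coprod.map upl upr
  let κinv : Coprod L₁ L₂ →* Coprod Λ₁ Λ₂ := Coprod.map dnl dnr
  have h1 : κinv.comp κhom = MonoidHom.id _ := by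
    apply Coprod.hom_ext <;> ext x <;>
      simp [κhom, κinv, Coprod.map_apply_inl, Coprod.map_apply_inr, upl, upr, dnl, dnr]
  have h2 : κhom.comp κinv = MonoidHom.id _ := by
    apply Coprod.hom_ext <;> ext x <;>
      simp [κhom, κinv, Coprod.map_apply_inl, Coprod.map_apply_inr, upl, upr, dnl, dnr]
  let κ : Coprod Λ₁ Λ₂ ≃* Coprod L₁ L₂ := MonoidHom.toMulEquiv κhom κinv h1 h2
  have hκinl : ∀ a : Λ₁, κ (Coprod.inl a) = Coprod.inl (upl a) := fun a =>
    Coprod.map_apply_inl _ _ _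
  have hκinr : ∀ a : Λ₂, κ (Coprod.inr a) = Coprod.inr (upr a) := fun a =>
    Coprod.map_apply_inr _ _ _
  have hs' : ¬ IsOfFinOrder (upl s) := by
    intro h
    apply hs
    rw [isOfFinOrder_iff_pow_eq_one] at h ⊢
    obtain ⟨m, hm, hme⟩ := h
    exact ⟨m, hm, by simpa [← map_pow, upl, dnl] using congrArg dnl hme⟩
  have ht' : ¬ IsOfFinOrder (upr t) := by
    intro h
    apply ht
    rw [isOfFinOrder_iff_pow_eq_one] at h ⊢
    obtain ⟨m, hm, hme⟩ := h
    exact ⟨m, hm, by simpa [← map_pow, upr, dnr] using congrArg dnr hme⟩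
  obtain ⟨D', E', hunion, hdisj, u', hucl, hFd, hud⟩ :=
    main_aux (upl s) hs' (upr t) ht' (F.image κ)
      (fun f hf => by
        obtain ⟨g, hg, rfl⟩ := Finset.mem_image.1 hf
        exact fun h => hF g hg (by simpa using (EmbeddingLike.map_eq_one_iff (f := κ)).1 h))
  refine ⟨κ ⁻¹' D', κ ⁻¹' E', ?_, ?_, fun j => κ.symm (u' j), ?_, ?_, ?_⟩
  · rw [← Set.preimage_union, hunion]
    exact Set.preimage_univ
  · exact Set.disjoint_left.2 fun a ha ha' =>
      Set.disjoint_left.1 hdisj ha ha'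
  · intro j
    have hmap : (Subgroup.closure {Coprod.inl s, Coprod.inr t}).map (κ : Coprod Λ₁ Λ₂ →* _)
        = Subgroup.closure {Coprod.inl (upl s), Coprod.inr (upr t)} := by
      rw [MonoidHom.map_closure]
      congr 1
      rw [Set.image_insert_eq, Set.image_singleton]
      simp [hκinl s, hκinr t]
    have : u' j ∈ (Subgroup.closure {Coprod.inl s, Coprod.inr t}).map
        (κ : Coprod Λ₁ Λ₂ →* _) := by
      rw [hmap]; exact hucl j
    obtain ⟨v, hv, hvk⟩ := this
    have hveq : κ.symm (u' j) = v := by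
      rw [← hvk]; exact κ.symm_apply_apply v
    show κ.symm (u' j) ∈ _
    rw [hveq]
    exact hv
  · intro f hf
    rw [Set.disjoint_left]
    rintro a ⟨x, hx, rfl⟩ hfx
    have hx' : κ x ∈ D' := hx
    have hfx' : κ (f * x) ∈ D' := hfx
    refine Set.disjoint_left.1 (hFd (κ f) (Finset.mem_image_of_mem _ hf))
      ⟨κ x, hx', ?_⟩ hfx'
    exact (map_mul κ f x).symm
  · intro j k hjk
    rw [Set.disjoint_left]
    rintro a ⟨x, hx, rfl⟩ ⟨y, hy, hxy⟩
    have hx' : κ x ∈ E' := hx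
    have hy' : κ y ∈ E' := hy
    have hxy' : κ.symm (u' k) * y = κ.symm (u' j) * x := hxy
    have mem1 : κ (κ.symm (u' j) * x) ∈ (fun d => u' j * d) '' E' :=
      ⟨κ x, hx', by rw [map_mul, κ.apply_symm_apply]⟩
    have mem2 : κ (κ.symm (u' j) * x) ∈ (fun d => u' k * d) '' E' :=
      ⟨κ y, hy', by rw [← hxy', map_mul, κ.apply_symm_apply]⟩
    exact Set.disjoint_left.1 (hud j k hjk) mem1 mem2
end

section
/- Let Γ = ∗_{i∈ℕ} Γ_i be the free product of a countably infinite family of countable groups, each containing an element of infinite order, and let α ∈ S(Γ,X) be an action on the Cantor set X satisfying property R. Then α is minimal: every Γ-orbit is dense in X. -/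
open TopologicalSpace

/-- Let `Γ = ∗_{i∈ℕ} G i` be the free product of countably many countable groups,
each containing an element of infinite order, and let `α` be a Cantor system of `Γ`
with property `R`. Then `α` is minimal: every `Γ`-orbit is dense in `X`. -/
theorem propertyR_implies_minimal (G : ℕ → Type*) [∀ i, Group (G i)]
    [∀ i, Countable (G i)] (htf : ∀ i, ∃ s : G i, ¬ IsOfFinOrder s)
    (X : Type*) [TopologicalSpace X] [CompactSpace X] [MetrizableSpace X]
    [TotallyDisconnectedSpace X] [PerfectSpace X] [Nonempty X]
    (α : Monoid.CoprodI G →* (X ≃ₜ X)) (hR : PropertyR α) :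
    ∀ x : X, Dense {y : X | ∃ s : Monoid.CoprodI G, α s x = y} := by
  intro x
  letI := TopologicalSpace.metrizableSpaceMetric X
  rw [dense_iff_inter_open]
  rintro V hV ⟨y, hy⟩
  obtain ⟨W', hW'clopen, hyW', hW'V⟩ :=
    isTopologicalBasis_isClopen.mem_nhds_iff.mp (hV.mem_nhds hy)
  obtain ⟨z, hz⟩ : ∃ z : X, z ≠ y := by
    have h1 : ({y}ᶜ : Set X) ∈ nhdsWithin y ({y}ᶜ : Set X) := self_mem_nhdsWithin
    obtain ⟨z, hz⟩ := Filter.nonempty_of_mem h1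
    exact ⟨z, hz⟩
  haveI : TotallySeparatedSpace X := loc_compact_t2_tot_disc_iff_tot_sep.mp inferInstance
  obtain ⟨W'', hW''clopen, hyW'', hzW''⟩ := exists_isClopen_of_totally_separated hz.symm
  set W := W' ∩ W'' with hWdef
  have hWclopen : IsClopen W := hW'clopen.inter hW''clopen
  have hWne : W.Nonempty := ⟨y, hyW', hyW''⟩
  have hWV : W ⊆ V := fun a ha => hW'V ha.1
  have hWproper : W ≠ Set.univ := fun h =>
    hzW'' ((h ▸ Set.mem_univ z : z ∈ W).2)
  by_cases hxW : x ∈ W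
  · exact ⟨x, hWV hxW, ⟨1, by rw [map_one]; rfl⟩⟩
  · have hclopen : ∀ i : Fin 2, IsClopen (![W, Wᶜ] i) := by
      intro i; fin_cases i
      · exact hWclopen
      · exact hWclopen.compl
    have hne : ∀ i : Fin 2, (![W, Wᶜ] i).Nonempty := by
      intro i; fin_cases i
      · exact hWne
      · exact Set.nonempty_compl.mpr hWproper
    have hproper : ∀ i : Fin 2, ![W, Wᶜ] i ≠ Set.univ := by
      intro i; fin_cases i
      · exact hWproper
      · simpa [Set.compl_univ_iff] using hWne.ne_empty
    have hdisj : Pairwise (Function.onFun Disjoint ![W, Wᶜ]) := by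
      intro i j hij
      fin_cases i <;> fin_cases j <;> simp_all [Function.onFun]
      · exact disjoint_compl_right
      · exact disjoint_compl_left
    have hinf := hR 2 ![W, Wᶜ] hclopen hne hproper hdisj
    obtain ⟨i, s, hs, hmaps⟩ := hinf.nonempty
    have h1 := hmaps 1
    have h2 : ((1 : Fin 2) + 1) = 0 := rfl
    rw [h2] at h1
    simp only [Matrix.cons_val_one, Matrix.head_cons, Matrix.cons_val_zero] at h1
    have hx' : x ∈ (Wᶜ : Set X) := hxW
    have hmem : α (Monoid.CoprodI.of s) x ∈ W := h1 ▸ Set.mem_image_of_mem _ hx'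
    exact ⟨α (Monoid.CoprodI.of s) x, hWV hmem, ⟨Monoid.CoprodI.of s, rfl⟩⟩
end
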